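/- Let n, d ≥ 1 and let A₁, …, Aₙ be skew-Hermitian d×d complex matrices. Suppose κ ≥ 0 is a real number with Σ_{k=1}^n Aₖᴴ Aₖ = κ·I, and L ≥ 0 satisfies ‖Aₖ‖ ≤ L for every k. Then for every real number u, ‖ Σ_{k=1}^n (exp(uAₖ) − I)ᴴ (exp(uAₖ) − I) − u²κ·I ‖ ≤ n|u|³L³ + n(u⁴/4)L⁴, where exp denotes the matrix exponential, I the d×d identity matrix, and ‖·‖ the ℓ²→ℓ² operator norm. -/

import Mathlib

open Matrix

/-- The ℓ²→ℓ² operator norm of a square complex matrix. -/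
noncomputable def matOpNorm {d : ℕ} (A : Matrix (Fin d) (Fin d) ℂ) : ℝ :=
  ‖Matrix.toEuclideanCLM (𝕜 := ℂ) A‖

set_option linter.unusedSectionVars false

section Abstract

variable {𝔸 : Type*} [NormedRing 𝔸] [StarRing 𝔸] [CStarRing 𝔸] [NormedAlgebra ℂ 𝔸]
  [StarModule ℂ 𝔸] [CompleteSpace 𝔸] [Nontrivial 𝔸]

lemma aux_norm_exp_le_one (a : 𝔸) (ha : star a = -a) (s : ℝ) :
    ‖NormedSpace.exp ((s : ℂ) • a)‖ ≤ 1 := by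
  set U := NormedSpace.exp ((s : ℂ) • a) with hU
  have hstar : star U = NormedSpace.exp (-((s : ℂ) • a)) := by
    rw [hU, NormedSpace.star_exp]
    congr 1
    rw [star_smul, ha]
    simp [Complex.conj_ofReal]
  have hmul : star U * U = 1 := by
    let +nondep : NormedAlgebra ℚ 𝔸 := .restrictScalars ℚ ℂ 𝔸
    rw [hstar, hU, ← NormedSpace.exp_add_of_commute (Commute.neg_left (Commute.refl _)),
      neg_add_cancel, NormedSpace.exp_zero]
  have h2 := CStarRing.norm_star_mul_self (x := U)
  rw [hmul, CStarRing.norm_one] at h2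
  nlinarith [norm_nonneg U]

lemma aux_hasDerivAt_exp (a : 𝔸) (s : ℝ) :
    HasDerivAt (fun t : ℝ => NormedSpace.exp ((t : ℂ) • a))
      (a * NormedSpace.exp ((s : ℂ) • a)) s := by
  have h1 := hasDerivAt_exp_smul_const' (𝕂 := ℂ) a ((s : ℝ) : ℂ)
  have h2 : HasDerivAt (fun t : ℝ => (t : ℂ)) 1 s := by
    simpa using (hasDerivAt_id s).ofReal_comp
  simpa [Function.comp_def] using h1.scomp s h2

lemma aux_exp_sub_one (a : 𝔸) (ha : star a = -a) {L u : ℝ} (hL : ‖a‖ ≤ L) (hu : 0 ≤ u) :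
    ‖NormedSpace.exp ((u : ℂ) • a) - 1‖ ≤ u * L := by
  have key := norm_image_sub_le_of_norm_deriv_le_segment'
    (f := fun t : ℝ => NormedSpace.exp ((t : ℂ) • a))
    (f' := fun t : ℝ => a * NormedSpace.exp ((t : ℂ) • a)) (a := 0) (b := u) (C := L)
    (fun x _ => (aux_hasDerivAt_exp a x).hasDerivWithinAt)
    (fun x hx => by
      calc ‖a * NormedSpace.exp ((x : ℂ) • a)‖ ≤ ‖a‖ * ‖NormedSpace.exp ((x : ℂ) • a)‖ :=
            norm_mul_le _ _
        _ ≤ L * 1 := by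
            have h0 : (0:ℝ) ≤ ‖a‖ := norm_nonneg _
            exact mul_le_mul hL (aux_norm_exp_le_one a ha x) (norm_nonneg _) (le_trans h0 hL)
        _ = L := mul_one L)
    u (by constructor <;> simp [hu])
  simpa [NormedSpace.exp_zero, mul_comm] using key

lemma aux_exp_taylor2 (a : 𝔸) (ha : star a = -a) {L u : ℝ} (hL : ‖a‖ ≤ L) (hu : 0 ≤ u) :
    ‖NormedSpace.exp ((u : ℂ) • a) - 1 - (u : ℂ) • a‖ ≤ u ^ 2 * L ^ 2 / 2 := by
  have hL0 : (0:ℝ) ≤ L := le_trans (norm_nonneg a) hL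
  set f : ℝ → 𝔸 := fun t => NormedSpace.exp ((t : ℂ) • a) - 1 - (t : ℂ) • a with hf
  have hderiv : ∀ x : ℝ, HasDerivAt f (a * (NormedSpace.exp ((x : ℂ) • a) - 1)) x := by
    intro x
    have h1 := (aux_hasDerivAt_exp a x).sub_const (1 : 𝔸)
    have h2 : HasDerivAt (fun t : ℝ => (t : ℂ) • a) a x := by
      have := (hasDerivAt_id x).smul_const a
      simpa [Complex.coe_smul] using this
    have := h1.sub h2
    rw [mul_sub, mul_one]
    exact this
  have key := image_norm_le_of_norm_deriv_right_le_deriv_boundary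
    (f := f) (f' := fun x => a * (NormedSpace.exp ((x : ℂ) • a) - 1))
    (a := 0) (b := u)
    (B := fun x => L ^ 2 * x ^ 2 / 2) (B' := fun x => L ^ 2 * x)
    (fun x _ => (hderiv x).continuousAt.continuousWithinAt)
    (fun x _ => (hderiv x).hasDerivWithinAt)
    (by simp [hf, NormedSpace.exp_zero])
    (fun x => by
      have h := (hasDerivAt_pow 2 x).const_mul (L ^ 2 / 2)
      have heq : (fun y : ℝ => L ^ 2 / 2 * y ^ 2) = fun y : ℝ => L ^ 2 * y ^ 2 / 2 := by
        funext y; ring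
      rw [heq] at h
      refine h.congr_deriv ?_
      push_cast; ring)
    (fun x hx => by
      calc ‖a * (NormedSpace.exp ((x : ℂ) • a) - 1)‖
          ≤ ‖a‖ * ‖NormedSpace.exp ((x : ℂ) • a) - 1‖ := norm_mul_le _ _
        _ ≤ L * (x * L) :=
            mul_le_mul hL (aux_exp_sub_one a ha hL hx.1) (norm_nonneg _) hL0
        _ = L ^ 2 * x := by ring)
  have := key (x := u) (by constructor <;> simp [hu])
  calc ‖f u‖ ≤ L ^ 2 * u ^ 2 / 2 := this
    _ = u ^ 2 * L ^ 2 / 2 := by ring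

end Abstract

section Abstract2

variable {𝔸 : Type*} [NormedRing 𝔸] [StarRing 𝔸] [CStarRing 𝔸] [NormedAlgebra ℂ 𝔸]
  [StarModule ℂ 𝔸] [CompleteSpace 𝔸] [Nontrivial 𝔸]

lemma aux_main_nonneg {n : ℕ} (a : Fin n → 𝔸) (ha : ∀ k, star (a k) = -(a k))
    (κ L : ℝ) (hL : 0 ≤ L)
    (hsum : ∑ k, star (a k) * a k = (κ : ℂ) • (1 : 𝔸))
    (hAL : ∀ k, ‖a k‖ ≤ L) {u : ℝ} (hu : 0 ≤ u) :
    ‖∑ k, star (NormedSpace.exp ((u : ℂ) • a k) - 1) *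
          (NormedSpace.exp ((u : ℂ) • a k) - 1) -
        ((u ^ 2 * κ : ℝ) : ℂ) • (1 : 𝔸)‖ ≤
      n * u ^ 3 * L ^ 3 + n * (u ^ 4 / 4) * L ^ 4 := by
  set E : Fin n → 𝔸 := fun k => NormedSpace.exp ((u : ℂ) • a k) - 1 - (u : ℂ) • a k with hE
  have hEk : ∀ k, ‖E k‖ ≤ u ^ 2 * L ^ 2 / 2 := fun k =>
    aux_exp_taylor2 (a k) (ha k) (hAL k) hu
  have hexp : ∀ k, NormedSpace.exp ((u : ℂ) • a k) - 1 = (u : ℂ) • a k + E k := by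
    intro k; rw [hE]; simp only [sub_sub]; abel
  have expand : ∀ k, star (NormedSpace.exp ((u : ℂ) • a k) - 1) *
      (NormedSpace.exp ((u : ℂ) • a k) - 1)
      = ((u : ℂ) * (u : ℂ)) • (star (a k) * a k) +
        ((u : ℂ) • (star (a k) * E k) + (u : ℂ) • (star (E k) * a k) + star (E k) * E k) := by
    intro k
    rw [hexp k, star_add, star_smul]
    have hcu : star ((u : ℂ)) = (u : ℂ) := by simp [Complex.conj_ofReal]
    rw [hcu]
    simp only [add_mul, mul_add, smul_mul_assoc, mul_smul_comm, smul_smul, smul_add]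
    abel
  have key : ∑ k, star (NormedSpace.exp ((u : ℂ) • a k) - 1) *
        (NormedSpace.exp ((u : ℂ) • a k) - 1) - ((u ^ 2 * κ : ℝ) : ℂ) • (1 : 𝔸)
      = ∑ k, ((u : ℂ) • (star (a k) * E k) + (u : ℂ) • (star (E k) * a k) +
          star (E k) * E k) := by
    rw [Finset.sum_congr rfl fun k _ => expand k, Finset.sum_add_distrib,
      ← Finset.smul_sum, hsum]
    have : ((u : ℂ) * (u : ℂ)) • ((κ : ℂ) • (1 : 𝔸)) = ((u ^ 2 * κ : ℝ) : ℂ) • (1 : 𝔸) := by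
      rw [smul_smul]
      congr 1
      push_cast
      ring
    rw [this]
    abel
  rw [key]
  have bound : ∀ k, ‖(u : ℂ) • (star (a k) * E k) + (u : ℂ) • (star (E k) * a k) +
      star (E k) * E k‖ ≤ u ^ 3 * L ^ 3 + u ^ 4 / 4 * L ^ 4 := by
    intro k
    have h1 : ‖(u : ℂ) • (star (a k) * E k)‖ ≤ u * (L * (u ^ 2 * L ^ 2 / 2)) := by
      rw [norm_smul, Complex.norm_real, Real.norm_eq_abs, abs_of_nonneg hu]
      refine mul_le_mul le_rfl ?_ (norm_nonneg _) hu
      calc ‖star (a k) * E k‖ ≤ ‖star (a k)‖ * ‖E k‖ := norm_mul_le _ _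
        _ = ‖a k‖ * ‖E k‖ := by rw [norm_star]
        _ ≤ L * (u ^ 2 * L ^ 2 / 2) :=
            mul_le_mul (hAL k) (hEk k) (norm_nonneg _) hL
    have h2 : ‖(u : ℂ) • (star (E k) * a k)‖ ≤ u * (u ^ 2 * L ^ 2 / 2 * L) := by
      rw [norm_smul, Complex.norm_real, Real.norm_eq_abs, abs_of_nonneg hu]
      refine mul_le_mul le_rfl ?_ (norm_nonneg _) hu
      calc ‖star (E k) * a k‖ ≤ ‖star (E k)‖ * ‖a k‖ := norm_mul_le _ _
        _ = ‖E k‖ * ‖a k‖ := by rw [norm_star]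
        _ ≤ u ^ 2 * L ^ 2 / 2 * L :=
            mul_le_mul (hEk k) (hAL k) (norm_nonneg _) (by positivity)
    have h3 : ‖star (E k) * E k‖ ≤ u ^ 2 * L ^ 2 / 2 * (u ^ 2 * L ^ 2 / 2) := by
      calc ‖star (E k) * E k‖ ≤ ‖star (E k)‖ * ‖E k‖ := norm_mul_le _ _
        _ = ‖E k‖ * ‖E k‖ := by rw [norm_star]
        _ ≤ u ^ 2 * L ^ 2 / 2 * (u ^ 2 * L ^ 2 / 2) :=
            mul_le_mul (hEk k) (hEk k) (norm_nonneg _) (by positivity)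
    calc ‖(u : ℂ) • (star (a k) * E k) + (u : ℂ) • (star (E k) * a k) + star (E k) * E k‖
        ≤ ‖(u : ℂ) • (star (a k) * E k)‖ + ‖(u : ℂ) • (star (E k) * a k)‖ +
          ‖star (E k) * E k‖ := norm_add₃_le
      _ ≤ u * (L * (u ^ 2 * L ^ 2 / 2)) + u * (u ^ 2 * L ^ 2 / 2 * L) +
          u ^ 2 * L ^ 2 / 2 * (u ^ 2 * L ^ 2 / 2) := by gcongr ?_ + ?_ + ?_ -- add bounds
      _ = u ^ 3 * L ^ 3 + u ^ 4 / 4 * L ^ 4 := by ring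
  calc ‖∑ k, ((u : ℂ) • (star (a k) * E k) + (u : ℂ) • (star (E k) * a k) +
        star (E k) * E k)‖
      ≤ ∑ k : Fin n, (u ^ 3 * L ^ 3 + u ^ 4 / 4 * L ^ 4) :=
        norm_sum_le_of_le _ fun k _ => bound k
    _ = n * u ^ 3 * L ^ 3 + n * (u ^ 4 / 4) * L ^ 4 := by
        rw [Finset.sum_const, Finset.card_univ, Fintype.card_fin, nsmul_eq_mul]
        ring

end Abstract2

section Abstract3

variable {𝔸 : Type*} [NormedRing 𝔸] [StarRing 𝔸] [CStarRing 𝔸] [NormedAlgebra ℂ 𝔸]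
  [StarModule ℂ 𝔸] [CompleteSpace 𝔸] [Nontrivial 𝔸]

lemma aux_main {n : ℕ} (a : Fin n → 𝔸) (ha : ∀ k, star (a k) = -(a k))
    (κ L : ℝ) (hL : 0 ≤ L)
    (hsum : ∑ k, star (a k) * a k = (κ : ℂ) • (1 : 𝔸))
    (hAL : ∀ k, ‖a k‖ ≤ L) (u : ℝ) :
    ‖∑ k, star (NormedSpace.exp ((u : ℂ) • a k) - 1) *
          (NormedSpace.exp ((u : ℂ) • a k) - 1) -
        ((u ^ 2 * κ : ℝ) : ℂ) • (1 : 𝔸)‖ ≤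
      n * |u| ^ 3 * L ^ 3 + n * (u ^ 4 / 4) * L ^ 4 := by
  rcases le_total 0 u with hu | hu
  · rw [abs_of_nonneg hu]
    exact aux_main_nonneg a ha κ L hL hsum hAL hu
  · have hu' : 0 ≤ -u := neg_nonneg.mpr hu
    have h := aux_main_nonneg (fun k => -(a k)) (fun k => by rw [star_neg, ha k])
      κ L hL (by simpa [mul_neg, neg_mul, neg_neg] using hsum)
      (fun k => by simpa using hAL k) hu'
    have hsmul : ∀ k, (((-u : ℝ)) : ℂ) • (-(a k)) = ((u : ℝ) : ℂ) • a k := by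
      intro k; push_cast; rw [neg_smul, smul_neg, neg_neg]
    simp only [hsmul] at h
    have e1 : ((-u) ^ 2 * κ : ℝ) = (u ^ 2 * κ : ℝ) := by ring
    rw [e1] at h
    calc _ ≤ (n : ℝ) * (-u) ^ 3 * L ^ 3 + n * ((-u) ^ 4 / 4) * L ^ 4 := h
      _ = n * |u| ^ 3 * L ^ 3 + n * (u ^ 4 / 4) * L ^ 4 := by
          rw [abs_of_nonpos hu]; ring

end Abstract3


open scoped Matrix.Norms.L2Operator in
theorem sum_exp_sub_one_conjTranspose_mul_eq_laplace' {n d : ℕ} (hn : 1 ≤ n) (hd : 1 ≤ d)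
    (A : Fin n → Matrix (Fin d) (Fin d) ℂ) (hA : ∀ k, (A k)ᴴ = -(A k))
    (κ L : ℝ) (hκ : 0 ≤ κ) (hL : 0 ≤ L)
    (hsum : ∑ k, (A k)ᴴ * A k = (κ : ℂ) • (1 : Matrix (Fin d) (Fin d) ℂ))
    (hAL : ∀ k, matOpNorm (A k) ≤ L) (u : ℝ) :
    matOpNorm (∑ k, (NormedSpace.exp ((u : ℂ) • A k) - 1)ᴴ *
          (NormedSpace.exp ((u : ℂ) • A k) - 1) -
        ((u ^ 2 * κ : ℝ) : ℂ) • (1 : Matrix (Fin d) (Fin d) ℂ)) ≤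
      n * |u| ^ 3 * L ^ 3 + n * (u ^ 4 / 4) * L ^ 4 := by
  haveI : Nonempty (Fin d) := ⟨⟨0, hd⟩⟩
  haveI : Nontrivial (Matrix (Fin d) (Fin d) ℂ) := inferInstance
  haveI : CompleteSpace (Matrix (Fin d) (Fin d) ℂ) := FiniteDimensional.complete ℂ _
  have hnorm : ∀ X : Matrix (Fin d) (Fin d) ℂ, matOpNorm X = ‖X‖ := fun X =>
    (Matrix.cstar_norm_def X).symm
  rw [hnorm]
  have h := aux_main A (fun k => by rw [Matrix.star_eq_conjTranspose]; exact hA k) κ L hL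
    (by simpa only [Matrix.star_eq_conjTranspose] using hsum)
    (fun k => by rw [← hnorm]; exact hAL k) u
  simpa only [Matrix.star_eq_conjTranspose] using h

/-- Lemma 3.3 of the paper, matrix form: if `A₁, …, Aₙ` are skew-Hermitian matrices with
`Σ Aₖᴴ Aₖ = κ·I` and `‖Aₖ‖ ≤ L`, then
`‖Σ (exp(uAₖ) − I)ᴴ(exp(uAₖ) − I) − u²κ·I‖ ≤ n|u|³L³ + n(u⁴/4)L⁴`. -/
theorem sum_exp_sub_one_conjTranspose_mul_eq_laplace {n d : ℕ} (hn : 1 ≤ n) (hd : 1 ≤ d)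
    (A : Fin n → Matrix (Fin d) (Fin d) ℂ) (hA : ∀ k, (A k)ᴴ = -(A k))
    (κ L : ℝ) (hκ : 0 ≤ κ) (hL : 0 ≤ L)
    (hsum : ∑ k, (A k)ᴴ * A k = (κ : ℂ) • (1 : Matrix (Fin d) (Fin d) ℂ))
    (hAL : ∀ k, matOpNorm (A k) ≤ L) (u : ℝ) :
    matOpNorm (∑ k, (NormedSpace.exp ((u : ℂ) • A k) - 1)ᴴ *
          (NormedSpace.exp ((u : ℂ) • A k) - 1) -
        ((u ^ 2 * κ : ℝ) : ℂ) • (1 : Matrix (Fin d) (Fin d) ℂ)) ≤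
      n * |u| ^ 3 * L ^ 3 + n * (u ^ 4 / 4) * L ^ 4 := by
  exact sum_exp_sub_one_conjTranspose_mul_eq_laplace' hn hd A hA κ L hκ hL hsum hAL u
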